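/- Occurrences of the factors 00 and 11 in the Thue-Morse word strictly alternate: between any two consecutive positions where 00 occurs (i.e., positions i with t(i)=t(i+1)=0), there is exactly one position where 11 occurs, and vice versa; moreover the first occurrence among {00,11} is an occurrence of 11. -/
import Mathlib


open scoped Classical

/-- The Thue-Morse word: parity of the binary digit sum. -/
def tm (n : ℕ) : ℕ := (Nat.digits 2 n).sum % 2

/-- `t[j..j+n-1] = t[i..i+n-1]` : an occurrence at `j` of the factor `t[i..i+n-1]`. -/
def feq (i j n : ℕ) : Prop := ∀ k < n, tm (j + k) = tm (i + k)

/-- `t[j..j+n-1]` is the binary complement of `t[i..i+n-1]`. -/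
def feqc (i j n : ℕ) : Prop := ∀ k < n, tm (j + k) = 1 - tm (i + k)

/-- Positions of occurrences of `x = t[i..i+n-1]` or its complement. -/
def occSet (i n : ℕ) : ℕ → Prop := fun j => feq i j n ∨ feqc i j n

/-- The intertwining sequence of `x = t[i..i+n-1]`: at index `m`, the label of the
`m`-th (in increasing order of position) occurrence of `x` or its complement;
`0` codes `A` (an occurrence of `x`), `1` codes `B` (an occurrence of the complement). -/
noncomputable def itw (i n m : ℕ) : ℕ :=
  if feq i (Nat.nth (occSet i n) m) n then 0 else 1

/-- The intertwining sequence is `(AB)^ω`. -/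
def ABpat (i n : ℕ) : Prop := ∀ m, itw i n m = m % 2

/-- The intertwining sequence is `(BA)^ω`. -/
def BApat (i n : ℕ) : Prop := ∀ m, itw i n m = (m + 1) % 2

/-- The intertwining sequence is `(ABBA)^ω`. -/
def ABBApat (i n : ℕ) : Prop :=
  ∀ m, itw i n m = if m % 4 = 0 ∨ m % 4 = 3 then 0 else 1

/-- The intertwining sequence is `(BAAB)^ω`. -/
def BAABpat (i n : ℕ) : Prop :=
  ∀ m, itw i n m = if m % 4 = 0 ∨ m % 4 = 3 then 1 else 0

/-- The length-`n` factor of the Thue-Morse word starting at position `i`, as a word. -/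
def fac (i n : ℕ) : List ℕ := (List.range n).map (fun k => tm (i + k))

def occ00 (i : ℕ) : Prop := tm i = 0 ∧ tm (i + 1) = 0

def occ11 (i : ℕ) : Prop := tm i = 1 ∧ tm (i + 1) = 1


/-- Position of an equal adjacent pair. -/
def eqp (i : ℕ) : Prop := tm i = tm (i + 1)

lemma tm_lt (n : ℕ) : tm n < 2 := Nat.mod_lt _ (by norm_num)

lemma tm_two_mul (n : ℕ) : tm (2 * n) = tm n := by
  rcases Nat.eq_zero_or_pos n with h | h
  · simp [h]
  · unfold tm
    rw [Nat.digits_def' (by norm_num : 1 < 2) (by omega : 0 < 2 * n)]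
    have h1 : 2 * n % 2 = 0 := by omega
    have h2 : 2 * n / 2 = n := by omega
    rw [h1, h2]
    simp

lemma tm_two_mul_add_one (n : ℕ) : tm (2 * n + 1) = (tm n + 1) % 2 := by
  unfold tm
  rw [Nat.digits_def' (by norm_num : 1 < 2) (by omega : 0 < 2 * n + 1)]
  have h1 : (2 * n + 1) % 2 = 1 := by omega
  have h2 : (2 * n + 1) / 2 = n := by omega
  rw [h1, h2]
  simp [List.sum_cons]
  omega

lemma not_eqp_even (n : ℕ) : ¬ eqp (2 * n) := by
  unfold eqp
  rw [tm_two_mul, tm_two_mul_add_one]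
  have := tm_lt n
  omega

lemma eqp_odd {i : ℕ} (h : eqp i) : ∃ a, i = 2 * a + 1 := by
  rcases Nat.even_or_odd i with ⟨a, ha⟩ | ⟨a, ha⟩
  · exact absurd h (by rw [ha, ← two_mul]; exact not_eqp_even a)
  · exact ⟨a, ha⟩

/-- Consecutive equal-pair positions carry opposite letters. -/
lemma alt {i j : ℕ} (hij : i < j) (hi : eqp i) (hj : eqp j)
    (hno : ∀ l, i < l → l < j → ¬ eqp l) : tm j ≠ tm i := by
  obtain ⟨a, rfl⟩ := eqp_odd hi
  obtain ⟨b, rfl⟩ := eqp_odd hj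
  have hab : a < b := by omega
  have key : ∀ m, a + 1 ≤ m → m ≤ b → tm m = tm (a + 1) := by
    intro m hm
    induction m, hm using Nat.le_induction with
    | base => intro _; rfl
    | succ m hm ih =>
      intro hmb
      have hne : ¬ eqp (2 * m + 1) := hno _ (by omega) (by omega)
      unfold eqp at hne
      rw [tm_two_mul_add_one] at hne
      have h2 : tm (2 * m + 1 + 1) = tm (m + 1) := by
        have : 2 * m + 1 + 1 = 2 * (m + 1) := by ring
        rw [this, tm_two_mul]
      rw [h2] at hne
      have h3 := tm_lt m
      have h4 := tm_lt (m + 1)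
      have h5 : tm (m + 1) = tm m := by omega
      rw [h5]
      exact ih (by omega)
  have hti : tm (2 * a + 1) = tm (a + 1) := by
    unfold eqp at hi
    rw [hi]
    have : 2 * a + 1 + 1 = 2 * (a + 1) := by ring
    rw [this, tm_two_mul]
  have htb : tm b = tm (a + 1) := key b (by omega) le_rfl
  rw [hti, tm_two_mul_add_one, htb]
  have := tm_lt (a + 1)
  omega

/-- Between two equal-pair positions carrying the same letter there is an
equal-pair position with the opposite letter. -/
lemma between {i j : ℕ} (hij : i < j) (hi : eqp i) (hj : eqp j)
    (heq : tm i = tm j) : ∃ k, i < k ∧ k < j ∧ eqp k ∧ tm k ≠ tm i := by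
  have hex : ∃ k, i < k ∧ k ≤ j ∧ eqp k := ⟨j, hij, le_rfl, hj⟩
  classical
  set k := Nat.find hex with hk
  obtain ⟨hk1, hk2, hk3⟩ := Nat.find_spec hex
  have hmin : ∀ l, i < l → l < k → ¬ eqp l := by
    intro l hl1 hl2 hl3
    exact Nat.find_min hex hl2 ⟨hl1, by omega, hl3⟩
  have hne : tm k ≠ tm i := alt hk1 hi hk3 hmin
  have hkj : k < j := by
    rcases lt_or_eq_of_le hk2 with h | h
    · exact h
    · exact absurd heq (by rw [← h]; exact fun he => hne he.symm)
  exact ⟨k, hk1, hkj, hk3, hne⟩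

lemma tm_zero : tm 0 = 0 := by simp [tm]

lemma tm_one : tm 1 = 1 := by
  have h := tm_two_mul_add_one 0
  rw [tm_zero] at h
  norm_num at h
  exact h

lemma occ11_one : occ11 1 := by
  have h2 : tm 2 = tm 1 := by have := tm_two_mul 1; norm_num at this; exact this
  exact ⟨tm_one, by rw [show (1:ℕ)+1 = 2 from rfl, h2, tm_one]⟩

/-- Occurrences of 00 and 11 in the Thue-Morse word strictly alternate:
between consecutive occurrences of 00 there is exactly one occurrence of 11,
and vice versa; the first occurrence among {00, 11} is an occurrence of 11. -/
theorem tm_00_11_alternate :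
    (∀ i j, i < j → occ00 i → occ00 j → (∀ l, i < l → l < j → ¬ occ00 l) →
      ∃! k, i < k ∧ k < j ∧ occ11 k) ∧
    (∀ i j, i < j → occ11 i → occ11 j → (∀ l, i < l → l < j → ¬ occ11 l) →
      ∃! k, i < k ∧ k < j ∧ occ00 k) ∧
    (∀ i, occ00 i ∨ occ11 i → ∃ j ≤ i, occ11 j) := by
  have h00 : ∀ i, occ00 i → eqp i ∧ tm i = 0 := fun i h => ⟨h.1.trans h.2.symm, h.1⟩
  have h11 : ∀ i, occ11 i → eqp i ∧ tm i = 1 := fun i h => ⟨h.1.trans h.2.symm, h.1⟩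
  refine ⟨?_, ?_, ?_⟩
  · intro i j hij hi hj hno
    obtain ⟨hie, hi0⟩ := h00 i hi
    obtain ⟨hje, hj0⟩ := h00 j hj
    obtain ⟨k, hk1, hk2, hk3, hk4⟩ := between hij hie hje (hi0.trans hj0.symm)
    have hk1' : tm k = 1 := by have := tm_lt k; omega
    refine ⟨k, ⟨hk1, hk2, hk1', hk3 ▸ hk1'⟩, ?_⟩
    intro y ⟨hy1, hy2, hy3⟩
    by_contra hne
    obtain ⟨hye, hy1'⟩ := h11 y hy3
    have hkk : occ11 k := ⟨hk1', hk3 ▸ hk1'⟩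
    obtain ⟨hke, _⟩ := h11 k hkk
    rcases lt_trichotomy y k with h | h | h
    · obtain ⟨l, hl1, hl2, hl3, hl4⟩ := between h hye hke (by omega)
      have hl0 : tm l = 0 := by have := tm_lt l; omega
      exact hno l (by omega) (by omega) ⟨hl0, hl3 ▸ hl0⟩
    · exact hne h
    · obtain ⟨l, hl1, hl2, hl3, hl4⟩ := between h hke hye (by omega)
      have hl0 : tm l = 0 := by have := tm_lt l; omega
      exact hno l (by omega) (by omega) ⟨hl0, hl3 ▸ hl0⟩
  · intro i j hij hi hj hno
    obtain ⟨hie, hi0⟩ := h11 i hi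
    obtain ⟨hje, hj0⟩ := h11 j hj
    obtain ⟨k, hk1, hk2, hk3, hk4⟩ := between hij hie hje (hi0.trans hj0.symm)
    have hk1' : tm k = 0 := by have := tm_lt k; omega
    refine ⟨k, ⟨hk1, hk2, hk1', hk3 ▸ hk1'⟩, ?_⟩
    intro y ⟨hy1, hy2, hy3⟩
    by_contra hne
    obtain ⟨hye, hy1'⟩ := h00 y hy3
    have hkk : occ00 k := ⟨hk1', hk3 ▸ hk1'⟩
    obtain ⟨hke, _⟩ := h00 k hkk
    rcases lt_trichotomy y k with h | h | h
    · obtain ⟨l, hl1, hl2, hl3, hl4⟩ := between h hye hke (by omega)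
      have hl0 : tm l = 1 := by have := tm_lt l; omega
      exact hno l (by omega) (by omega) ⟨hl0, hl3 ▸ hl0⟩
    · exact hne h
    · obtain ⟨l, hl1, hl2, hl3, hl4⟩ := between h hke hye (by omega)
      have hl0 : tm l = 1 := by have := tm_lt l; omega
      exact hno l (by omega) (by omega) ⟨hl0, hl3 ▸ hl0⟩
  · intro i hi
    have he : eqp i := by
      rcases hi with h | h
      · exact (h00 i h).1
      · exact (h11 i h).1
    obtain ⟨a, ha⟩ := eqp_odd he
    exact ⟨1, by omega, occ11_one⟩
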